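/- Let f, g : (0, ∞) → ℝ be continuous functions with g positive, such that f(t)/g(t) is decreasing for t > 0. Then the function t ↦ (∫₀ᵗ f(s) ds) / (∫₀ᵗ g(s) ds) is decreasing for t > 0. -/
import Mathlib


open intervalIntegral

/-- If `f, g` are continuous on `[0,∞)`, `g > 0` on `(0,∞)` and `f/g` is
decreasing on `(0,∞)`, then `t ↦ (∫₀ᵗ f)/(∫₀ᵗ g)` is decreasing on `(0,∞)`. -/
theorem stmt_2 (f g : ℝ → ℝ)
    (hf : ContinuousOn f (Set.Ici 0)) (hg : ContinuousOn g (Set.Ici 0))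
    (hgpos : ∀ t > 0, 0 < g t)
    (hdec : AntitoneOn (fun t => f t / g t) (Set.Ioi 0)) :
    AntitoneOn (fun t => (∫ s in (0:ℝ)..t, f s) / (∫ s in (0:ℝ)..t, g s)) (Set.Ioi 0) := by
  intro a ha b hb hab
  simp only [Set.mem_Ioi] at ha hb
  set r := f a / g a with hr
  have hint : ∀ t : ℝ, 0 ≤ t → IntervalIntegrable f MeasureTheory.volume 0 t := fun t ht =>
    (hf.mono (by rw [Set.uIcc_of_le ht]; exact Set.Icc_subset_Ici_self)).intervalIntegrable
  have hintg : ∀ t : ℝ, 0 ≤ t → IntervalIntegrable g MeasureTheory.volume 0 t := fun t ht =>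
    (hg.mono (by rw [Set.uIcc_of_le ht]; exact Set.Icc_subset_Ici_self)).intervalIntegrable
  have hintab : IntervalIntegrable f MeasureTheory.volume a b :=
    (hf.mono (by rw [Set.uIcc_of_le hab]; exact fun x hx => le_trans ha.le hx.1)).intervalIntegrable
  have hintgab : IntervalIntegrable g MeasureTheory.volume a b :=
    (hg.mono (by rw [Set.uIcc_of_le hab]; exact fun x hx => le_trans ha.le hx.1)).intervalIntegrable
  have hGa : 0 < ∫ s in (0:ℝ)..a, g s :=
    intervalIntegral.intervalIntegral_pos_of_pos_on (hintg a ha.le)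
      (fun x hx => hgpos x hx.1) ha
  have hGb : 0 < ∫ s in (0:ℝ)..b, g s :=
    intervalIntegral.intervalIntegral_pos_of_pos_on (hintg b hb.le)
      (fun x hx => hgpos x hx.1) hb
  -- pointwise inequalities
  have key1 : ∀ s ∈ Set.Ioc (0:ℝ) a, r * g s ≤ f s := by
    intro s hs
    have h := hdec (Set.mem_Ioi.mpr hs.1) (Set.mem_Ioi.mpr ha) hs.2
    exact (le_div_iff₀ (hgpos s hs.1)).mp h
  have key0 : r * g 0 ≤ f 0 := by
    have hcont : ContinuousOn (fun s => f s - r * g s) (Set.Ici 0) :=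
      hf.sub (continuousOn_const.mul hg)
    have htend : Filter.Tendsto (fun s => f s - r * g s) (nhdsWithin 0 (Set.Ioi 0))
        (nhds (f 0 - r * g 0)) :=
      (hcont 0 Set.self_mem_Ici).mono_left (nhdsWithin_mono 0 Set.Ioi_subset_Ici_self)
    have hev : ∀ᶠ s in nhdsWithin 0 (Set.Ioi 0), 0 ≤ f s - r * g s := by
      filter_upwards [Ioo_mem_nhdsGT_of_mem (by constructor <;> [exact le_rfl; exact ha] :
        (0:ℝ) ∈ Set.Ico 0 a)] with s hs
      have := key1 s ⟨hs.1, hs.2.le⟩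
      linarith
    have := ge_of_tendsto htend hev
    linarith
  have ineq1 : r * ∫ s in (0:ℝ)..a, g s ≤ ∫ s in (0:ℝ)..a, f s := by
    rw [← intervalIntegral.integral_const_mul]
    apply intervalIntegral.integral_mono_on ha.le ((hintg a ha.le).const_mul r) (hint a ha.le)
    intro x hx
    rcases eq_or_lt_of_le hx.1 with h | h
    · rw [← h]; exact key0
    · exact key1 x ⟨h, hx.2⟩
  have ineq2 : ∫ s in a..b, f s ≤ r * ∫ s in a..b, g s := by
    rw [← intervalIntegral.integral_const_mul]
    apply intervalIntegral.integral_mono_on hab hintab (hintgab.const_mul r)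
    intro x hx
    have hx0 : 0 < x := lt_of_lt_of_le ha hx.1
    have h := hdec (Set.mem_Ioi.mpr ha) (Set.mem_Ioi.mpr hx0) hx.1
    exact (div_le_iff₀ (hgpos x hx0)).mp h
  have hJ : 0 ≤ ∫ s in a..b, g s := by
    apply intervalIntegral.integral_nonneg hab
    intro x hx
    exact (hgpos x (lt_of_lt_of_le ha hx.1)).le
  have hFb : (∫ s in (0:ℝ)..b, f s) = (∫ s in (0:ℝ)..a, f s) + ∫ s in a..b, f s :=
    (intervalIntegral.integral_add_adjacent_intervals (hint a ha.le) hintab).symm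
  have hGbeq : (∫ s in (0:ℝ)..b, g s) = (∫ s in (0:ℝ)..a, g s) + ∫ s in a..b, g s :=
    (intervalIntegral.integral_add_adjacent_intervals (hintg a ha.le) hintgab).symm
  rw [div_le_div_iff₀ hGb hGa, hFb, hGbeq]
  nlinarith [mul_nonneg hJ hGa.le, mul_le_mul_of_nonneg_right ineq2 hGa.le,
    mul_le_mul_of_nonneg_right ineq1 hJ]
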